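/- arXiv:2012.06915 — 2 statements merged into one kernel-verified Lean document; each statement's English description precedes it below -/
import Mathlib

section
/- For the EWL payoff function of any 2×2 game, for every p ∈ [0,1], the convex combination p·v1(0,0,0; π/2,0,π/2) + (1−p)·v1(π,0,0; π/2,0,π/2) equals (a00 + a10)/2; i.e., every classical mixed strategy of player 1 against U(π/2,0,π/2) yields payoff (a00+a10)/2. -/
open Real

/-- Player 1's payoff in the EWL scheme for a 2×2 game with payoffs
`a00 a01 a10 a11`, at the strategy profile `(U(θ1,α1,β1), U(θ2,α2,β2))`. -/
noncomputable def ewlV1 (a00 a01 a10 a11 θ1 α1 β1 θ2 α2 β2 : ℝ) : ℝ :=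
  a00 * (cos (α1 + α2) * cos (θ1/2) * cos (θ2/2) +
         sin (β1 + β2) * sin (θ1/2) * sin (θ2/2))^2 +
  a01 * (sin (α2 - β1) * sin (θ1/2) * cos (θ2/2) +
         cos (α1 - β2) * cos (θ1/2) * sin (θ2/2))^2 +
  a10 * (cos (α2 - β1) * sin (θ1/2) * cos (θ2/2) +
         sin (α1 - β2) * cos (θ1/2) * sin (θ2/2))^2 +
  a11 * (cos (β1 + β2) * sin (θ1/2) * sin (θ2/2) -
         sin (α1 + α2) * cos (θ1/2) * cos (θ2/2))^2

/-- Every classical mixed strategy of player 1 (a mixture of `U(0,0,0)` and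
`U(π,0,0)`) against `U(π/2,0,π/2)` yields the payoff `(a00 + a10)/2`. -/
theorem ewl_classical_mixed_constant (a00 a01 a10 a11 : ℝ) :
    ∀ p : ℝ, p ∈ Set.Icc (0:ℝ) 1 →
      p * ewlV1 a00 a01 a10 a11 0 0 0 (π/2) 0 (π/2) +
        (1 - p) * ewlV1 a00 a01 a10 a11 π 0 0 (π/2) 0 (π/2) =
        (a00 + a10) / 2 := by
  intro p _
  have h4 : π/2/2 = π/4 := by ring
  simp only [ewlV1, h4, cos_pi_div_four, sin_pi_div_four, cos_pi_div_two,
    sin_pi_div_two, zero_add, add_zero, sub_zero, zero_sub, cos_zero, sin_zero,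
    cos_neg, sin_neg]
  norm_num
  ring_nf
  rw [Real.sq_sqrt (by norm_num : (0:ℝ) ≤ 2)]; ring
end

section
/- In the EWL game on Matching Pennies restricted to the strategy sets D1 = D2 = {U(θ,0,0) : θ ∈ [0,π]} ∪ {U(π/2,0,−π/2)}, there is no pure Nash equilibrium. -/
open Real

/-- A strategy in the restricted EWL Matching Pennies game: `some θ` stands for
the one-parameter operator `U(θ,0,0)` (with `θ ∈ [0,π]`), and `none` stands for
the quantum strategy `U(π/2,0,−π/2)`. -/
def ValidStrat (s : Option ℝ) : Prop := s.elim True (fun θ => θ ∈ Set.Icc 0 π)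

/-- Player 1's payoff in the EWL Matching Pennies game on the restricted
strategy sets `{U(θ,0,0) : θ ∈ [0,π]} ∪ {U(π/2,0,−π/2)}`. -/
noncomputable def mpPay : Option ℝ → Option ℝ → ℝ
  | some θ1, some θ2 => cos θ1 * cos θ2
  | some θ1, none => -sin θ1
  | none, some θ2 => -sin θ2
  | none, none => 0

lemma valid_zero : ValidStrat (some 0) := by
  simp [ValidStrat, Set.mem_Icc, pi_nonneg]

lemma valid_pi : ValidStrat (some π) := by
  simp [ValidStrat, Set.mem_Icc, pi_nonneg]

lemma valid_none : ValidStrat none := trivial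

lemma valid_half : ValidStrat (some (π/2)) := by
  constructor <;> nlinarith [pi_nonneg]

/-- The EWL Matching Pennies game on these restricted strategy sets has no pure
Nash equilibrium (player 2's payoff is the negative of player 1's). -/
theorem ewl_matching_pennies_no_pure_nash :
    ¬ ∃ s1 s2 : Option ℝ, ValidStrat s1 ∧ ValidStrat s2 ∧
      (∀ s1', ValidStrat s1' → mpPay s1' s2 ≤ mpPay s1 s2) ∧
      (∀ s2', ValidStrat s2' → -(mpPay s1 s2') ≤ -(mpPay s1 s2)) := by
  rintro ⟨s1, s2, v1, v2, h1, h2⟩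
  have h2' : ∀ s2', ValidStrat s2' → mpPay s1 s2 ≤ mpPay s1 s2' := by
    intro s2' hv; linarith [h2 s2' hv]
  match s1, s2, v1, v2, h1, h2' with
  | none, none, v1, v2, h1, h2' =>
    have := h2' (some (π/2)) valid_half
    simp [mpPay, Real.sin_pi_div_two] at this
    linarith
  | none, some θ2, v1, v2, h1, h2' =>
    obtain ⟨hθ0, hθπ⟩ := v2
    have hs : 0 ≤ sin θ2 := sin_nonneg_of_nonneg_of_le_pi hθ0 hθπ
    have hsq : sin θ2 ^ 2 + cos θ2 ^ 2 = 1 := sin_sq_add_cos_sq θ2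
    have hA : cos 0 * cos θ2 ≤ -sin θ2 := h1 (some 0) valid_zero
    have hB : cos π * cos θ2 ≤ -sin θ2 := h1 (some π) valid_pi
    rw [Real.cos_zero] at hA
    rw [Real.cos_pi] at hB
    nlinarith
  | some θ1, none, v1, v2, h1, h2' =>
    obtain ⟨hθ0, hθπ⟩ := v1
    have hs : 0 ≤ sin θ1 := sin_nonneg_of_nonneg_of_le_pi hθ0 hθπ
    have h0 : -sin (0:ℝ) ≤ -sin θ1 := h1 (some 0) valid_zero
    simp at h0
    have hsin0 : sin θ1 = 0 := le_antisymm h0 hs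
    have hsq : sin θ1 ^ 2 + cos θ1 ^ 2 = 1 := sin_sq_add_cos_sq θ1
    have hA : -sin θ1 ≤ cos θ1 * cos 0 := h2' (some 0) valid_zero
    have hB : -sin θ1 ≤ cos θ1 * cos π := h2' (some π) valid_pi
    rw [Real.cos_zero] at hA
    rw [Real.cos_pi] at hB
    nlinarith
  | some θ1, some θ2, v1, v2, h1, h2' =>
    obtain ⟨h10, h1π⟩ := v1
    have hs1 : 0 ≤ sin θ1 := sin_nonneg_of_nonneg_of_le_pi h10 h1π
    have hsq : sin θ1 ^ 2 + cos θ1 ^ 2 = 1 := sin_sq_add_cos_sq θ1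
    have hA : cos 0 * cos θ2 ≤ cos θ1 * cos θ2 := h1 (some 0) valid_zero
    have hB : cos π * cos θ2 ≤ cos θ1 * cos θ2 := h1 (some π) valid_pi
    have hC : cos θ1 * cos θ2 ≤ cos θ1 * cos 0 := h2' (some 0) valid_zero
    have hD : cos θ1 * cos θ2 ≤ cos θ1 * cos π := h2' (some π) valid_pi
    have hE : cos θ1 * cos θ2 ≤ -sin θ1 := h2' none valid_none
    rw [Real.cos_zero] at hA hC
    rw [Real.cos_pi] at hB hD
    -- from hA,hB: |cos θ2| ≤ cos θ1 * cos θ2; from hC,hD: cos θ1 * cos θ2 ≤ -|cos θ1|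
    have hc1 : cos θ1 = 0 := by nlinarith
    have hc2 : sin θ1 = 1 := by nlinarith
    rw [hc1, hc2] at hE
    linarith
end
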